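/- arXiv:2205.13870 — 2 statements merged into one kernel-verified Lean document; each statement's English description precedes it below -/
import Mathlib

section
/- Let C be a configuration whose smallest enclosing rectangle, after translating so that its corners are A = (0,0), B = (n−1, 0), C = (n−1, m−1), D = (0, m−1), has width n ≥ 1 and height m ≥ 1. Define σ_h : ℤ² → ℤ² by σ_h(x, y) = (x, m−1−y) (reflection across the horizontal line bisecting the rectangle). Then λ_AB = λ_DC if and only if σ_h maps C onto C, i.e. C is invariant under reflection across the horizontal bisector of its smallest enclosing rectangle. -/
/-! Robots occupy distinct points of the integer grid `ℤ²`; a configuration is a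
nonempty finite set `C : Finset (ℤ × ℤ)`.  Throughout, the smallest enclosing
rectangle is translated so that its corners are `A = (0,0)`, `B = (n-1,0)`,
`C = (n-1,m-1)`, `D = (0,m-1)`, where `n` is the number of grid points on side
`AB` and `m` the number of grid points on side `AD`. -/

/-- Occupancy scan of a rectangle: `M` successive grid lines, each holding `N`
grid points; `f i j` is the grid point on the `i`-th line at position `j`;
record `true` at occupied and `false` at unoccupied grid points. -/
def scanStr (C : Finset (ℤ × ℤ)) (M N : ℕ) (f : ℕ → ℕ → ℤ × ℤ) : List Bool :=
  (List.range M).flatMap (fun i => (List.range N).map (fun j => decide (f i j ∈ C)))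

/-- `λ_AB`: rows `y = 0, …, m-1`, each scanned with `x` ascending. -/
def lamAB (C : Finset (ℤ × ℤ)) (n m : ℕ) : List Bool :=
  scanStr C m n (fun y x => ((x : ℤ), (y : ℤ)))

/-- `λ_BA`: rows `y = 0, …, m-1`, each scanned with `x` descending. -/
def lamBA (C : Finset (ℤ × ℤ)) (n m : ℕ) : List Bool :=
  scanStr C m n (fun y x => ((n : ℤ) - 1 - x, (y : ℤ)))

/-- `λ_CD`: rows `y = m-1, …, 0`, each scanned with `x` descending. -/
def lamCD (C : Finset (ℤ × ℤ)) (n m : ℕ) : List Bool :=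
  scanStr C m n (fun y x => ((n : ℤ) - 1 - x, (m : ℤ) - 1 - y))

/-- `λ_DC`: rows `y = m-1, …, 0`, each scanned with `x` ascending. -/
def lamDC (C : Finset (ℤ × ℤ)) (n m : ℕ) : List Bool :=
  scanStr C m n (fun y x => ((x : ℤ), (m : ℤ) - 1 - y))

/-- `λ_BC`: columns `x = n-1, …, 0`, each scanned with `y` ascending. -/
def lamBC (C : Finset (ℤ × ℤ)) (n m : ℕ) : List Bool :=
  scanStr C n m (fun x y => ((n : ℤ) - 1 - x, (y : ℤ)))

/-- `λ_CB`: columns `x = n-1, …, 0`, each scanned with `y` descending. -/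
def lamCB (C : Finset (ℤ × ℤ)) (n m : ℕ) : List Bool :=
  scanStr C n m (fun x y => ((n : ℤ) - 1 - x, (m : ℤ) - 1 - y))

/-- `λ_AD`: columns `x = 0, …, n-1`, each scanned with `y` ascending. -/
def lamAD (C : Finset (ℤ × ℤ)) (n m : ℕ) : List Bool :=
  scanStr C n m (fun x y => ((x : ℤ), (y : ℤ)))

/-- `λ_DA`: columns `x = 0, …, n-1`, each scanned with `y` descending. -/
def lamDA (C : Finset (ℤ × ℤ)) (n m : ℕ) : List Bool :=
  scanStr C n m (fun x y => ((x : ℤ), (m : ℤ) - 1 - y))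

/-- Strict lexicographic comparison of binary strings. -/
def lexLt (a b : List Bool) : Prop := List.Lex (· < ·) a b

/-- The smallest enclosing rectangle of `C` is `[0, n-1] × [0, m-1]`
(`n` grid points wide, `m` grid points high). -/
def isSER (C : Finset (ℤ × ℤ)) (n m : ℕ) : Prop :=
  (∀ p ∈ C, 0 ≤ p.1 ∧ p.1 ≤ (n : ℤ) - 1 ∧ 0 ≤ p.2 ∧ p.2 ≤ (m : ℤ) - 1) ∧
  (∃ p ∈ C, p.1 = 0) ∧ (∃ p ∈ C, p.1 = (n : ℤ) - 1) ∧
  (∃ p ∈ C, p.2 = 0) ∧ (∃ p ∈ C, p.2 = (m : ℤ) - 1)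

/-- The order in which grid points are visited by the scan `λ_AB`:
`p` comes strictly before `q`. -/
def scanLt (p q : ℤ × ℤ) : Prop := p.2 < q.2 ∨ (p.2 = q.2 ∧ p.1 < q.1)

/-- `h` is the head of `C`: the robot at the position of the first `1` of `λ_AB`. -/
def isHead (C : Finset (ℤ × ℤ)) (h : ℤ × ℤ) : Prop :=
  h ∈ C ∧ ∀ p ∈ C, p ≠ h → scanLt h p

/-- `t` is the tail of `C`: the robot at the position of the last `1` of `λ_AB`. -/
def isTail (C : Finset (ℤ × ℤ)) (t : ℤ × ℤ) : Prop :=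
  t ∈ C ∧ ∀ p ∈ C, p ≠ t → scanLt p t

/-- The four associated strings of a non-square configuration. -/
def strings4 (C : Finset (ℤ × ℤ)) (n m : ℕ) : List (List Bool) :=
  [lamAB C n m, lamBA C n m, lamCD C n m, lamDC C n m]

/-- The eight associated strings of a configuration whose rectangle is a square. -/
def strings8 (C : Finset (ℤ × ℤ)) (n m : ℕ) : List (List Bool) :=
  [lamAB C n m, lamBA C n m, lamCD C n m, lamDC C n m,
   lamBC C n m, lamCB C n m, lamAD C n m, lamDA C n m]

/-- The associated strings of `C`: eight of them if the rectangle is a square,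
four otherwise. -/
def assocStrings (C : Finset (ℤ × ℤ)) (n m : ℕ) : List (List Bool) :=
  if n = m then strings8 C n m else strings4 C n m

/-- The `i`-th member of the list `L` of associated strings is the unique
lexicographically largest one: every other member (by position) is strictly
smaller. -/
def uniqueMaxAt (L : List (List Bool)) (i : ℕ) : Prop :=
  i < L.length ∧ ∀ j < L.length, j ≠ i → lexLt (L.getD j []) (L.getD i [])

/-- `C` is asymmetric: among its associated strings there is a unique
lexicographically largest one. -/
def asymmetricCfg (C : Finset (ℤ × ℤ)) (n m : ℕ) : Prop :=
  ∃ i, uniqueMaxAt (assocStrings C n m) i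

/-- `λ_AB` is the unique lexicographically largest associated string of `C`
(so `C` is asymmetric with leading corner `A`). -/
def leadingABCfg (C : Finset (ℤ × ℤ)) (n m : ℕ) : Prop :=
  uniqueMaxAt (assocStrings C n m) 0

lemma scan_eq_iff (C : Finset (ℤ × ℤ)) (N : ℕ) (f g : ℕ → ℕ → ℤ × ℤ) (M : ℕ) :
    scanStr C M N f = scanStr C M N g ↔
      ∀ i < M, ∀ j < N, ((f i j ∈ C) ↔ (g i j ∈ C)) := by
  induction M with
  | zero => simp [scanStr]
  | succ M ih =>
    have hlen : ∀ h : ℕ → ℕ → ℤ × ℤ, (scanStr C M N h).length = M * N := by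
      intro h
      simp [scanStr, Function.comp_def, mul_comm]
    have hrow : ((List.range N).map (fun j => decide (f M j ∈ C)) =
        (List.range N).map (fun j => decide (g M j ∈ C))) ↔
        ∀ j < N, ((f M j ∈ C) ↔ (g M j ∈ C)) := by
      simp [List.map_inj_left, decide_eq_decide]
    have hsplit : scanStr C (M+1) N f = scanStr C (M+1) N g ↔
        (scanStr C M N f = scanStr C M N g ∧
          (List.range N).map (fun j => decide (f M j ∈ C)) =
          (List.range N).map (fun j => decide (g M j ∈ C))) := by
      unfold scanStr
      rw [List.range_succ, List.flatMap_append, List.flatMap_append]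
      simp only [List.flatMap_cons, List.flatMap_nil, List.append_nil]
      constructor
      · intro h
        exact List.append_inj h (by rw [← scanStr, ← scanStr, hlen, hlen])
      · rintro ⟨h1, h2⟩; rw [h1, h2]
    rw [hsplit, ih]
    constructor
    · rintro ⟨h1, h2⟩ i hi j hj
      rcases Nat.lt_succ_iff_lt_or_eq.mp hi with h | rfl
      · exact h1 i h j hj
      · exact (hrow.mp h2) j hj
    · intro h
      exact ⟨fun i hi => h i (Nat.lt_succ_of_lt hi),
        hrow.mpr (fun j hj => h M (Nat.lt_succ_self M) j hj)⟩

/-- Let `C` be a configuration whose smallest enclosing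
rectangle, after translation, has corners `A = (0,0)`, `B = (n-1,0)`,
`C = (n-1,m-1)`, `D = (0,m-1)` with `n ≥ 1`, `m ≥ 1`.  Define
`σ_h(x, y) = (x, m-1-y)` (reflection across the horizontal line bisecting the
rectangle).  Then `λ_AB = λ_DC` if and only if `σ_h` maps `C` onto `C`, i.e.
`C` is invariant under reflection across the horizontal bisector of its
smallest enclosing rectangle. -/
theorem lamAB_eq_lamDC_iff_horizontal_reflection_invariant
    (C : Finset (ℤ × ℤ)) (n m : ℕ) (hn : 1 ≤ n) (hm : 1 ≤ m)
    (hser : isSER C n m) :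
    lamAB C n m = lamDC C n m ↔
      C.image (fun p => (p.1, (m : ℤ) - 1 - p.2)) = C := by
  rw [lamAB, lamDC, scan_eq_iff]
  constructor
  · intro H
    have key : ∀ p ∈ C, (p.1, (m : ℤ) - 1 - p.2) ∈ C := by
      intro p hp
      obtain ⟨hx0, hxn, hy0, hym⟩ := hser.1 p hp
      have hxnat : (p.1.toNat : ℤ) = p.1 := Int.toNat_of_nonneg hx0
      have hynat : (p.2.toNat : ℤ) = p.2 := Int.toNat_of_nonneg hy0
      have hxlt : p.1.toNat < n := by omega
      have hylt : p.2.toNat < m := by omega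
      have := (H p.2.toNat hylt p.1.toNat hxlt).mp
      rw [hxnat, hynat] at this
      exact this hp
    apply Finset.Subset.antisymm
    · intro q hq
      simp only [Finset.mem_image] at hq
      obtain ⟨p, hp, rfl⟩ := hq
      exact key p hp
    · intro p hp
      refine Finset.mem_image.mpr ⟨(p.1, (m : ℤ) - 1 - p.2), key p hp, ?_⟩
      simp
  · intro H y hy x hx
    constructor
    · intro h
      rw [← H]
      exact Finset.mem_image.mpr ⟨_, h, rfl⟩
    · intro h
      have : ((x : ℤ), (m : ℤ) - 1 - ((m : ℤ) - 1 - y)) ∈ C := by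
        rw [← H]
        exact Finset.mem_image.mpr ⟨_, h, rfl⟩
      simpa using this
end

section
/- Let C be a configuration whose smallest enclosing rectangle R = ABCD is non-square, with A = (0,0), B = (n−1,0), C = (n−1,m−1), D = (0,m−1) after translation and m ≠ n. Then the following are equivalent: (1) among the four associated strings λ_AB, λ_BA, λ_CD, λ_DC there is a unique lexicographically largest one (C is asymmetric); (2) none of the three nontrivial symmetries of R — the reflection σ_v(x,y) = (n−1−x, y), the reflection σ_h(x,y) = (x, m−1−y) and the rotation ρ(x,y) = (n−1−x, m−1−y) — maps C onto C. -/
section Aux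

private lemma lexLt_irrefl (x : List Bool) : ¬ lexLt x x := by
  induction x with
  | nil => intro h; cases h
  | cons a l ih =>
    intro h
    cases h with
    | cons h => exact ih h
    | rel h => exact lt_irrefl _ h

private lemma lexLt_trans : ∀ {x y z : List Bool}, lexLt x y → lexLt y z → lexLt x z := by
  intro x y z h1
  induction h1 generalizing z with
  | nil => intro h2; cases h2 <;> exact List.Lex.nil
  | @cons a l k h ih =>
    intro h2
    cases h2 with
    | cons h2 => exact List.Lex.cons (ih h2)
    | rel h2 => exact List.Lex.rel h2
  | @rel l a k b h =>
    intro h2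
    cases h2 with
    | cons h2 => exact List.Lex.rel h
    | rel h2 => exact List.Lex.rel (h.trans h2)

private lemma lexLt_total : ∀ (x y : List Bool), x ≠ y → lexLt x y ∨ lexLt y x := by
  intro x
  induction x with
  | nil =>
    intro y h
    cases y with
    | nil => exact absurd rfl h
    | cons b k => exact Or.inl List.Lex.nil
  | cons a l ih =>
    intro y h
    cases y with
    | nil => exact Or.inr List.Lex.nil
    | cons b k =>
      rcases lt_trichotomy a b with hab | hab | hab
      · exact Or.inl (List.Lex.rel hab)
      · subst hab
        have hlk : l ≠ k := fun hh => h (by rw [hh])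
        rcases ih k hlk with h1 | h1
        · exact Or.inl (List.Lex.cons h1)
        · exact Or.inr (List.Lex.cons h1)
      · exact Or.inr (List.Lex.rel hab)

private lemma flatMap_eq_iff {α β : Type*} (l : List α) (f g : α → List β)
    (hlen : ∀ x ∈ l, (f x).length = (g x).length) :
    l.flatMap f = l.flatMap g ↔ ∀ x ∈ l, f x = g x := by
  induction l with
  | nil => simp
  | cons a l ih =>
    simp only [List.flatMap_cons, List.mem_cons]
    constructor
    · intro h
      obtain ⟨h1, h2⟩ := List.append_inj h (hlen a (by simp))
      have := (ih (fun x hx => hlen x (by simp [hx]))).mp h2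
      rintro x (rfl | hx)
      · exact h1
      · exact this x hx
    · intro h
      rw [h a (Or.inl rfl),
        (ih (fun x hx => hlen x (by simp [hx]))).mpr (fun x hx => h x (Or.inr hx))]

private lemma scanStr_eq_iff (C C' : Finset (ℤ × ℤ)) (M N : ℕ) (f g : ℕ → ℕ → ℤ × ℤ) :
    scanStr C M N f = scanStr C' M N g ↔
      ∀ i < M, ∀ j < N, ((f i j ∈ C) ↔ (g i j ∈ C')) := by
  unfold scanStr
  rw [flatMap_eq_iff _ _ _ (by simp)]
  simp only [List.map_inj_left, List.mem_range, decide_eq_decide]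

private lemma mem_image_sv {n : ℕ} {C : Finset (ℤ × ℤ)} {x y : ℤ} :
    (x, y) ∈ C.image (fun p => ((n : ℤ) - 1 - p.1, p.2)) ↔ ((n : ℤ) - 1 - x, y) ∈ C := by
  simp only [Finset.mem_image]
  constructor
  · rintro ⟨⟨a, b⟩, hp, heq⟩
    simp only [Prod.mk.injEq] at heq
    obtain ⟨h1, h2⟩ := heq
    have ha : (n : ℤ) - 1 - x = a := by omega
    rw [ha, ← h2]; exact hp
  · intro h
    exact ⟨((n : ℤ) - 1 - x, y), h, by simp [sub_sub_cancel]⟩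

private lemma mem_image_sh {m : ℕ} {C : Finset (ℤ × ℤ)} {x y : ℤ} :
    (x, y) ∈ C.image (fun p => (p.1, (m : ℤ) - 1 - p.2)) ↔ (x, (m : ℤ) - 1 - y) ∈ C := by
  simp only [Finset.mem_image]
  constructor
  · rintro ⟨⟨a, b⟩, hp, heq⟩
    simp only [Prod.mk.injEq] at heq
    obtain ⟨h1, h2⟩ := heq
    have hb : (m : ℤ) - 1 - y = b := by omega
    rw [hb, ← h1]; exact hp
  · intro h
    exact ⟨(x, (m : ℤ) - 1 - y), h, by simp [sub_sub_cancel]⟩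

private lemma mem_image_rho {n m : ℕ} {C : Finset (ℤ × ℤ)} {x y : ℤ} :
    (x, y) ∈ C.image (fun p => ((n : ℤ) - 1 - p.1, (m : ℤ) - 1 - p.2)) ↔
      ((n : ℤ) - 1 - x, (m : ℤ) - 1 - y) ∈ C := by
  simp only [Finset.mem_image]
  constructor
  · rintro ⟨⟨a, b⟩, hp, heq⟩
    simp only [Prod.mk.injEq] at heq
    obtain ⟨h1, h2⟩ := heq
    have ha : (n : ℤ) - 1 - x = a := by omega
    have hb : (m : ℤ) - 1 - y = b := by omega
    rw [ha, hb]; exact hp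
  · intro h
    exact ⟨((n : ℤ) - 1 - x, (m : ℤ) - 1 - y), h, by simp [sub_sub_cancel]⟩

private lemma lamBA_eq (C : Finset (ℤ × ℤ)) (n m : ℕ) :
    lamBA C n m = lamAB (C.image (fun p => ((n : ℤ) - 1 - p.1, p.2))) n m := by
  rw [lamBA, lamAB, scanStr_eq_iff]
  intro i hi j hj
  exact mem_image_sv.symm

private lemma lamDC_eq (C : Finset (ℤ × ℤ)) (n m : ℕ) :
    lamDC C n m = lamAB (C.image (fun p => (p.1, (m : ℤ) - 1 - p.2))) n m := by
  rw [lamDC, lamAB, scanStr_eq_iff]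
  intro i hi j hj
  exact mem_image_sh.symm

private lemma lamCD_eq (C : Finset (ℤ × ℤ)) (n m : ℕ) :
    lamCD C n m = lamAB (C.image (fun p => ((n : ℤ) - 1 - p.1, (m : ℤ) - 1 - p.2))) n m := by
  rw [lamCD, lamAB, scanStr_eq_iff]
  intro i hi j hj
  exact mem_image_rho.symm

/-- Points inside the rectangle. -/
private def inRect (n m : ℕ) (p : ℤ × ℤ) : Prop :=
  0 ≤ p.1 ∧ p.1 ≤ (n : ℤ) - 1 ∧ 0 ≤ p.2 ∧ p.2 ≤ (m : ℤ) - 1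

private lemma lamAB_inj {C C' : Finset (ℤ × ℤ)} {n m : ℕ}
    (hC : ∀ p ∈ C, inRect n m p) (hC' : ∀ p ∈ C', inRect n m p)
    (h : lamAB C n m = lamAB C' n m) : C = C' := by
  rw [lamAB, lamAB, scanStr_eq_iff] at h
  ext p
  obtain ⟨x, y⟩ := p
  constructor <;> intro hp
  · obtain ⟨h1, h2, h3, h4⟩ := hC _ hp
    simp only at h1 h2 h3 h4
    have hx : ((x.toNat : ℤ), (y.toNat : ℤ)) = (x, y) := by
      rw [Int.toNat_of_nonneg h1, Int.toNat_of_nonneg h3]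
    have := (h y.toNat (by omega) x.toNat (by omega)).mp (by rwa [hx])
    rwa [hx] at this
  · obtain ⟨h1, h2, h3, h4⟩ := hC' _ hp
    simp only at h1 h2 h3 h4
    have hx : ((x.toNat : ℤ), (y.toNat : ℤ)) = (x, y) := by
      rw [Int.toNat_of_nonneg h1, Int.toNat_of_nonneg h3]
    have := (h y.toNat (by omega) x.toNat (by omega)).mpr (by rwa [hx])
    rwa [hx] at this

private lemma image_inRect {C : Finset (ℤ × ℤ)} {n m : ℕ}
    (hC : ∀ p ∈ C, inRect n m p) {g : ℤ × ℤ → ℤ × ℤ}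
    (hg : ∀ p, inRect n m p → inRect n m (g p)) :
    ∀ p ∈ C.image g, inRect n m p := by
  intro p hp
  rw [Finset.mem_image] at hp
  obtain ⟨q, hq, rfl⟩ := hp
  exact hg q (hC q hq)

private lemma uniqueMax4 (a b c d : List Bool) (i : ℕ) (hi : i < 4)
    (h : ∀ j < 4, j ≠ i → lexLt ([a, b, c, d].getD j []) ([a, b, c, d].getD i [])) :
    uniqueMaxAt [a, b, c, d] i :=
  ⟨by simpa using hi, by simpa using h⟩

private lemma not_uniqueMaxAt (L : List (List Bool)) (i j : ℕ) (hj : j < L.length)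
    (hne : j ≠ i) (heq : L.getD j [] = L.getD i []) : ¬ uniqueMaxAt L i := by
  rintro ⟨hi, h⟩
  have := h j hj hne
  rw [heq] at this
  exact lexLt_irrefl _ this

private lemma exists_uniqueMax_four (a b c d : List Bool)
    (hab : a ≠ b) (hac : a ≠ c) (had : a ≠ d)
    (hbc : b ≠ c) (hbd : b ≠ d) (hcd : c ≠ d) :
    ∃ i, uniqueMaxAt [a, b, c, d] i := by
  have mk : ∀ i < 4,
      (∀ j < 4, j ≠ i → lexLt ([a, b, c, d].getD j []) ([a, b, c, d].getD i [])) →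
      ∃ i, uniqueMaxAt [a, b, c, d] i := fun i hi h => ⟨i, uniqueMax4 a b c d i hi h⟩
  rcases lexLt_total a b hab with h1 | h1
  · rcases lexLt_total b c hbc with h2 | h2
    · rcases lexLt_total c d hcd with h3 | h3
      · refine mk 3 (by norm_num) ?_
        intro j hj hne
        interval_cases j <;> simp only [List.getD] <;>
          [exact lexLt_trans h1 (lexLt_trans h2 h3);
           exact lexLt_trans h2 h3; exact h3; exact absurd rfl hne]
      · refine mk 2 (by norm_num) ?_
        intro j hj hne
        interval_cases j <;> simp only [List.getD] <;>
          [exact lexLt_trans h1 h2; exact h2; exact absurd rfl hne; exact h3]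
    · rcases lexLt_total b d hbd with h3 | h3
      · refine mk 3 (by norm_num) ?_
        intro j hj hne
        interval_cases j <;> simp only [List.getD] <;>
          [exact lexLt_trans h1 h3; exact h3;
           exact lexLt_trans h2 h3; exact absurd rfl hne]
      · refine mk 1 (by norm_num) ?_
        intro j hj hne
        interval_cases j <;> simp only [List.getD] <;>
          [exact h1; exact absurd rfl hne; exact h2; exact h3]
  · rcases lexLt_total a c hac with h2 | h2
    · rcases lexLt_total c d hcd with h3 | h3
      · refine mk 3 (by norm_num) ?_
        intro j hj hne
        interval_cases j <;> simp only [List.getD] <;>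
          [exact lexLt_trans h2 h3;
           exact lexLt_trans h1 (lexLt_trans h2 h3); exact h3; exact absurd rfl hne]
      · refine mk 2 (by norm_num) ?_
        intro j hj hne
        interval_cases j <;> simp only [List.getD] <;>
          [exact h2; exact lexLt_trans h1 h2; exact absurd rfl hne; exact h3]
    · rcases lexLt_total a d had with h3 | h3
      · refine mk 3 (by norm_num) ?_
        intro j hj hne
        interval_cases j <;> simp only [List.getD] <;>
          [exact h3; exact lexLt_trans h1 h3;
           exact lexLt_trans h2 h3; exact absurd rfl hne]
      · refine mk 0 (by norm_num) ?_
        intro j hj hne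
        interval_cases j <;> simp only [List.getD] <;>
          [exact absurd rfl hne; exact h1; exact h2; exact h3]

end Aux

/-- Let `C` be a configuration whose smallest enclosing
rectangle `R = ABCD` is non-square, with `A = (0,0)`, `B = (n-1,0)`,
`C = (n-1,m-1)`, `D = (0,m-1)` after translation and `m ≠ n`.  Then the
following are equivalent: (1) among the four associated strings `λ_AB`, `λ_BA`,
`λ_CD`, `λ_DC` there is a unique lexicographically largest one (`C` is
asymmetric); (2) none of the three nontrivial symmetries of `R` — the
reflection `σ_v(x,y) = (n-1-x, y)`, the reflection `σ_h(x,y) = (x, m-1-y)` and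
the rotation `ρ(x,y) = (n-1-x, m-1-y)` — maps `C` onto `C`. -/
theorem asymmetric_iff_no_nontrivial_rectangle_symmetry
    (C : Finset (ℤ × ℤ)) (n m : ℕ) (hn : 1 ≤ n) (hm : 1 ≤ m) (hne : n ≠ m)
    (hser : isSER C n m) :
    (∃ i, uniqueMaxAt (strings4 C n m) i) ↔
      (C.image (fun p => ((n : ℤ) - 1 - p.1, p.2)) ≠ C ∧
       C.image (fun p => (p.1, (m : ℤ) - 1 - p.2)) ≠ C ∧
       C.image (fun p => ((n : ℤ) - 1 - p.1, (m : ℤ) - 1 - p.2)) ≠ C) := by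
  obtain ⟨hbd, -⟩ := hser
  have hbd' : ∀ p ∈ C, inRect n m p := hbd
  -- the three symmetry maps
  set sv : ℤ × ℤ → ℤ × ℤ := fun p => ((n : ℤ) - 1 - p.1, p.2) with hsv
  set sh : ℤ × ℤ → ℤ × ℤ := fun p => (p.1, (m : ℤ) - 1 - p.2) with hsh
  set rho : ℤ × ℤ → ℤ × ℤ := fun p => ((n : ℤ) - 1 - p.1, (m : ℤ) - 1 - p.2) with hrho
  have bSv : ∀ p, inRect n m p → inRect n m (sv p) := by
    rintro ⟨x, y⟩ ⟨h1, h2, h3, h4⟩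
    exact ⟨by simp only [hsv]; omega, by simp only [hsv]; omega,
           by simp only [hsv]; omega, by simp only [hsv]; omega⟩
  have bSh : ∀ p, inRect n m p → inRect n m (sh p) := by
    rintro ⟨x, y⟩ ⟨h1, h2, h3, h4⟩
    exact ⟨by simp only [hsh]; omega, by simp only [hsh]; omega,
           by simp only [hsh]; omega, by simp only [hsh]; omega⟩
  have bRho : ∀ p, inRect n m p → inRect n m (rho p) := by
    rintro ⟨x, y⟩ ⟨h1, h2, h3, h4⟩
    exact ⟨by simp only [hrho]; omega, by simp only [hrho]; omega,
           by simp only [hrho]; omega, by simp only [hrho]; omega⟩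
  have hb := lamBA_eq C n m
  have hd := lamDC_eq C n m
  have hc := lamCD_eq C n m
  rw [← hsv] at hb
  rw [← hsh] at hd
  rw [← hrho] at hc
  have hvr : sv ∘ rho = sh := by
    funext p; simp [hsv, hrho, hsh, sub_sub_cancel]
  have hhr : sh ∘ rho = sv := by
    funext p; simp [hsv, hrho, hsh, sub_sub_cancel]
  have hvv : sv ∘ sv = id := by
    funext p; simp [hsv, sub_sub_cancel]
  have hhh : sh ∘ sh = id := by
    funext p; simp [hsh, sub_sub_cancel]
  have hcomp_vh : (C.image sv).image sh = C.image rho := by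
    rw [Finset.image_image]; rfl
  have hcomp_hv : (C.image sh).image sv = C.image rho := by
    rw [Finset.image_image]; rfl
  have hs4 : strings4 C n m = [lamAB C n m, lamBA C n m, lamCD C n m, lamDC C n m] := rfl
  constructor
  · rintro ⟨i, hu⟩
    rw [hs4] at hu
    refine ⟨?_, ?_, ?_⟩
    · -- σ_v does not fix C
      intro heq
      have e1 : lamBA C n m = lamAB C n m := by rw [hb, heq]
      have himg : Finset.image rho C = Finset.image sh C := by
        conv_lhs => rw [← hcomp_vh]
        rw [heq]
      have e2 : lamCD C n m = lamDC C n m := by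
        rw [hc, hd, himg]
      obtain ⟨hi, h⟩ := hu
      simp only [List.length_cons, List.length_nil] at hi
      interval_cases i
      · exact lexLt_irrefl _ (by simpa [List.getD, e1] using h 1 (by norm_num) (by norm_num))
      · exact lexLt_irrefl _ (by simpa [List.getD, e1] using h 0 (by norm_num) (by norm_num))
      · exact lexLt_irrefl _ (by simpa [List.getD, e2] using h 3 (by norm_num) (by norm_num))
      · exact lexLt_irrefl _ (by simpa [List.getD, e2] using h 2 (by norm_num) (by norm_num))
    · -- σ_h does not fix C
      intro heq
      have e1 : lamDC C n m = lamAB C n m := by rw [hd, heq]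
      have himg : Finset.image sv C = Finset.image rho C := by
        conv_rhs => rw [← hcomp_hv]
        rw [heq]
      have e2 : lamBA C n m = lamCD C n m := by
        rw [hb, hc, himg]
      obtain ⟨hi, h⟩ := hu
      simp only [List.length_cons, List.length_nil] at hi
      interval_cases i
      · exact lexLt_irrefl _ (by simpa [List.getD, e1] using h 3 (by norm_num) (by norm_num))
      · exact lexLt_irrefl _ (by simpa [List.getD, e2] using h 2 (by norm_num) (by norm_num))
      · exact lexLt_irrefl _ (by simpa [List.getD, e2] using h 1 (by norm_num) (by norm_num))
      · exact lexLt_irrefl _ (by simpa [List.getD, e1] using h 0 (by norm_num) (by norm_num))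
    · -- ρ does not fix C
      intro heq
      have e1 : lamCD C n m = lamAB C n m := by rw [hc, heq]
      have himg : Finset.image sv C = Finset.image sh C := by
        conv_lhs => rw [← heq]
        rw [Finset.image_image, hvr]
      have e2 : lamBA C n m = lamDC C n m := by
        rw [hb, hd, himg]
      obtain ⟨hi, h⟩ := hu
      simp only [List.length_cons, List.length_nil] at hi
      interval_cases i
      · exact lexLt_irrefl _ (by simpa [List.getD, e1] using h 2 (by norm_num) (by norm_num))
      · exact lexLt_irrefl _ (by simpa [List.getD, e2] using h 3 (by norm_num) (by norm_num))
      · exact lexLt_irrefl _ (by simpa [List.getD, e1] using h 0 (by norm_num) (by norm_num))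
      · exact lexLt_irrefl _ (by simpa [List.getD, e2] using h 1 (by norm_num) (by norm_num))
  · rintro ⟨hv, hh, hr⟩
    have bv := image_inRect hbd' bSv
    have bh := image_inRect hbd' bSh
    have br := image_inRect hbd' bRho
    have hab : lamAB C n m ≠ lamBA C n m := by
      rw [hb]; intro h
      exact hv (lamAB_inj hbd' bv h).symm
    have hac : lamAB C n m ≠ lamCD C n m := by
      rw [hc]; intro h
      exact hr (lamAB_inj hbd' br h).symm
    have had : lamAB C n m ≠ lamDC C n m := by
      rw [hd]; intro h
      exact hh (lamAB_inj hbd' bh h).symm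
    have hbc : lamBA C n m ≠ lamCD C n m := by
      rw [hb, hc]; intro h
      have := lamAB_inj bv br h
      have h2 : (C.image sv).image sv = (C.image rho).image sv := by rw [this]
      rw [Finset.image_image, Finset.image_image] at h2
      rw [hvv, hvr, Finset.image_id] at h2
      exact hh h2.symm
    have hbd2 : lamBA C n m ≠ lamDC C n m := by
      rw [hb, hd]; intro h
      have := lamAB_inj bv bh h
      have h2 : (C.image sv).image sv = (C.image sh).image sv := by rw [this]
      rw [Finset.image_image, Finset.image_image] at h2
      have hvh : sv ∘ sh = rho := by
        funext p; simp [hsv, hsh, hrho]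
      rw [hvv, hvh, Finset.image_id] at h2
      exact hr h2.symm
    have hcd : lamCD C n m ≠ lamDC C n m := by
      rw [hc, hd]; intro h
      have := lamAB_inj br bh h
      have h2 : (C.image rho).image sh = (C.image sh).image sh := by rw [this]
      rw [Finset.image_image, Finset.image_image] at h2
      rw [hhh, hhr, Finset.image_id] at h2
      exact hv h2
    rw [hs4]
    exact exists_uniqueMax_four _ _ _ _ hab hac had hbc hbd2 hcd
end
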